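/- Let n ≥ 2 and let h be a Hamiltonian cycle of the hypercube Q_n. If for some i < n the number of i-th dimension edges of h is strictly greater than the equi-independence number α_=(Q_{n-1}) of the hypercube Q_{n-1}, then h contains a square whose rims are i-th dimension edges: there exist a vertex v and an index j ≠ i such that both {v, v + e_i} and {v + e_j, v + e_i + e_j} are edges of h. -/

import Mathlib

/-- The `n`-dimensional hypercube graph: vertices are vectors in `Fin n → ZMod 2`,
two vertices adjacent iff they differ in exactly one coordinate. -/
def Q (n : ℕ) : SimpleGraph (Fin n → ZMod 2) where
  Adj u v := ∃ i : Fin n, v = u + Pi.single i 1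
  symm := by
    constructor
    rintro u v ⟨i, rfl⟩
    refine ⟨i, funext fun j => ?_⟩
    by_cases hj : j = i <;> simp [Pi.single_apply, hj]
    · exact (by decide : ∀ a : ZMod 2, a = a + 1 + 1) _
  loopless := by
    constructor
    rintro u ⟨i, hi⟩
    have := congrFun hi i
    simp [Pi.single_apply] at this

/-- `e` is an `i`-th dimension edge of the hypercube. -/
def isDimEdge {n : ℕ} (i : Fin n) (e : Sym2 (Fin n → ZMod 2)) : Prop :=
  ∃ w : Fin n → ZMod 2, e = s(w, w + Pi.single i 1)

instance {n : ℕ} (i : Fin n) : DecidablePred (isDimEdge i) := fun e =>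
  inferInstanceAs (Decidable (∃ w : Fin n → ZMod 2, e = s(w, w + Pi.single i 1)))

/-- The number of `i`-th dimension edges in a closed walk (entry `cᵢ` of the
chromatic vector when the walk is a Hamiltonian cycle). -/
def dimCount {n : ℕ} (i : Fin n) {u : Fin n → ZMod 2} (p : (Q n).Walk u u) : ℕ :=
  p.edges.countP (fun e => decide (isDimEdge i e))

/-- Parity of a vertex of the hypercube: number of coordinates equal to 1, mod 2. -/
def par {n : ℕ} (v : Fin n → ZMod 2) : ZMod 2 := ∑ j, v j

/-- A finite set of vertices is independent in `G` if no two of its elements are adjacent. -/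
def IsIndepFinset {V : Type*} (G : SimpleGraph V) (S : Finset V) : Prop :=
  ∀ u ∈ S, ∀ v ∈ S, ¬ G.Adj u v

/-- The equi-independence number of the hypercube `Q m`: the maximum cardinality of an
independent set containing equally many even-parity and odd-parity vertices. -/
noncomputable def equiIndepNum (m : ℕ) : ℕ :=
  sSup {k : ℕ | ∃ S : Finset (Fin m → ZMod 2), IsIndepFinset (Q m) S ∧
    (S.filter fun v => par v = 0).card = (S.filter fun v => par v = 1).card ∧
    S.card = k}

namespace SqAux

variable {m : ℕ}

lemma single_add_single (i : Fin (m+1)) :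
    (Pi.single i 1 : Fin (m+1) → ZMod 2) + Pi.single i 1 = 0 := by
  funext k
  simp only [Pi.add_apply, Pi.zero_apply]
  rcases eq_or_ne k i with rfl | hk
  · rw [Pi.single_eq_same]; decide
  · rw [Pi.single_eq_of_ne hk]; simp

/-- projection deleting coordinate `i` -/
def pr (i : Fin (m+1)) (v : Fin (m+1) → ZMod 2) : Fin m → ZMod 2 :=
  fun j => v (i.succAbove j)

lemma pr_add_single (i : Fin (m+1)) (v : Fin (m+1) → ZMod 2) (j : Fin m) :
    pr i (v + Pi.single (i.succAbove j) 1) = pr i v + Pi.single j 1 := by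
  funext k
  simp [pr, Pi.single_apply, Fin.succAbove_right_inj]

lemma pr_eq_cases {i : Fin (m+1)} {a b : Fin (m+1) → ZMod 2} (hab : pr i a = pr i b) :
    a = b ∨ a = b + Pi.single i 1 := by
  by_cases hi : a i = b i
  · left
    funext k
    rcases eq_or_ne k i with rfl | hk
    · exact hi
    · obtain ⟨j, rfl⟩ := Fin.exists_succAbove_eq hk
      exact congrFun hab j
  · right
    funext k
    rcases eq_or_ne k i with rfl | hk
    · have : ∀ x y : ZMod 2, x ≠ y → x = y + 1 := by decide
      simpa using this _ _ hi
    · obtain ⟨j, rfl⟩ := Fin.exists_succAbove_eq hk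
      have := congrFun hab j
      simpa [pr, Pi.single_apply, (Fin.succAbove_ne i j)] using this

lemma pr_insertNth (i : Fin (m+1)) (w : Fin m → ZMod 2) :
    pr i (i.insertNth 0 w) = w := by
  funext j
  simp [pr]

lemma par_add_single {n : ℕ} (v : Fin n → ZMod 2) (j : Fin n) :
    par (v + Pi.single j 1) = par v + 1 := by
  simp [par, Finset.sum_add_distrib]

lemma par_pr (i : Fin (m+1)) (v : Fin (m+1) → ZMod 2) :
    par (pr i v) = par v + v i := by
  have h1 : par v = v i + par (pr i v) := Fin.sum_univ_succAbove v i
  have h2 : ∀ a b : ZMod 2, a + b + a = b := by decide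
  rw [h1]
  exact (h2 _ _).symm

/-- sign of the projected parity -/
def rho (i : Fin (m+1)) (v : Fin (m+1) → ZMod 2) : ℤ :=
  if par v + v i = 0 then 1 else -1

def rho' {k : ℕ} (w : Fin k → ZMod 2) : ℤ := if par w = 0 then 1 else -1

lemma rho_pr (i : Fin (m+1)) (v : Fin (m+1) → ZMod 2) :
    rho i v = rho' (pr i v) := by
  rw [rho, rho', par_pr]

lemma rho_add_single_self (i : Fin (m+1)) (v : Fin (m+1) → ZMod 2) :
    rho i (v + Pi.single i 1) = rho i v := by
  unfold rho
  simp only [par_add_single, Pi.add_apply, Pi.single_eq_same]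
  have : ∀ x y : ZMod 2, (if x + 1 + (y + 1) = 0 then (1:ℤ) else -1) =
      (if x + y = 0 then 1 else -1) := by decide
  exact this _ _

lemma rho_add_single_ne (i : Fin (m+1)) {j : Fin (m+1)} (hj : j ≠ i)
    (v : Fin (m+1) → ZMod 2) :
    rho i (v + Pi.single j 1) = - rho i v := by
  unfold rho
  simp only [par_add_single, Pi.add_apply, Pi.single_eq_of_ne (Ne.symm hj), add_zero]
  have : ∀ x y : ZMod 2, (if x + 1 + y = 0 then (1:ℤ) else -1) =
      -(if x + y = 0 then 1 else -1) := by decide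
  exact this _ _

lemma sum_rho_zero (i : Fin (m+1)) (hm : 1 ≤ m) :
    ∑ v : Fin (m+1) → ZMod 2, rho i v = 0 := by
  set j1 : Fin (m+1) := i.succAbove ⟨0, hm⟩ with hj1
  have hne : j1 ≠ i := Fin.succAbove_ne i _
  refine Finset.sum_ninvolution (fun v => v + Pi.single j1 1) ?_ ?_ (fun _ => Finset.mem_univ _) ?_
  · intro v
    rw [rho_add_single_ne i hne]
    ring
  · intro v _
    intro hcontra
    have := congrFun hcontra j1
    simp at this
  · intro v
    show v + Pi.single j1 1 + Pi.single j1 1 = v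
    rw [add_assoc, single_add_single, add_zero]

lemma sum_map_ite {α} (l : List α) (p : α → Bool) (f : α → ℤ) :
    (l.map fun a => if p a then f a else 0).sum = ((l.filter p).map f).sum := by
  induction l with
  | nil => rfl
  | cons a l ih => by_cases hpa : p a <;> simp [List.filter_cons, hpa, ih]

lemma sum_map_add' {α} (l : List α) (f g : α → ℤ) :
    (l.map fun a => f a + g a).sum = (l.map f).sum + (l.map g).sum := by
  induction l with
  | nil => rfl
  | cons a l ih => simp [ih]; ring

end SqAux

open SqAux SimpleGraph

theorem square_of_equiIndep_bound (n : ℕ) (hn : 2 ≤ n) (u : Fin n → ZMod 2)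
    (h : (Q n).Walk u u) (hh : h.IsHamiltonianCycle) (i : Fin n)
    (hc : equiIndepNum (n - 1) < dimCount i h) :
    ∃ (v : Fin n → ZMod 2) (j : Fin n), j ≠ i ∧
      s(v, v + Pi.single i 1) ∈ h.edges ∧
      s(v + Pi.single j 1, v + Pi.single i 1 + Pi.single j 1) ∈ h.edges := by
  by_contra hsq
  push_neg at hsq
  obtain ⟨m, rfl⟩ : ∃ m, n = m + 1 := ⟨n - 1, by omega⟩
  have hm : 1 ≤ m := by omega
  have hdartedge : ∀ d : (Q (m+1)).Dart, d.edge = s(d.fst, d.snd) := fun d => rfl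
  have hsnd : ∀ d : (Q (m+1)).Dart, isDimEdge i d.edge → d.snd = d.fst + Pi.single i 1 := by
    intro d hd
    obtain ⟨w, hw⟩ := hd
    rw [hdartedge d, Sym2.eq_iff] at hw
    rcases hw with ⟨h1, h2⟩ | ⟨h1, h2⟩
    · rw [h2, h1]
    · rw [h2, h1, add_assoc, single_add_single, add_zero]
  set L : List ((Q (m+1)).Dart) := h.darts.filter (fun d => decide (isDimEdge i d.edge))
    with hLdef
  have hmemL : ∀ d ∈ L, isDimEdge i d.edge ∧ d ∈ h.darts := by
    intro d hd
    rw [hLdef, List.mem_filter] at hd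
    exact ⟨of_decide_eq_true hd.2, hd.1⟩
  have hedgeL : ∀ d ∈ L, s(d.fst, d.fst + Pi.single i 1) ∈ h.edges := by
    intro d hd
    obtain ⟨hdim, hdarts⟩ := hmemL d hd
    have hme : d.edge ∈ h.edges := List.mem_map_of_mem (f := Dart.edge) hdarts
    rwa [hdartedge d, hsnd d hdim] at hme
  set S : Finset (Fin m → ZMod 2) := (L.map (fun d => pr i d.fst)).toFinset with hSdef
  have hmemS : ∀ a ∈ S, ∃ d ∈ L, pr i d.fst = a := by
    intro a ha
    rw [hSdef, List.mem_toFinset, List.mem_map] at ha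
    obtain ⟨d, hd, hda⟩ := ha
    exact ⟨d, hd, hda⟩
  have hindep : IsIndepFinset (Q m) S := by
    intro a ha b hb hab
    obtain ⟨j, hbeq⟩ : ∃ j : Fin m, b = a + Pi.single j 1 := hab
    obtain ⟨d1, hd1L, hd1⟩ := hmemS a ha
    obtain ⟨d2, hd2L, hd2⟩ := hmemS b hb
    have hj' : i.succAbove j ≠ i := Fin.succAbove_ne i j
    have key : pr i d2.fst = pr i (d1.fst + Pi.single (i.succAbove j) 1) := by
      rw [pr_add_single, hd1, hd2, hbeq]
    have h2mem := hedgeL d2 hd2L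
    have hcomm : d1.fst + Pi.single i 1 + Pi.single (i.succAbove j) 1
        = d1.fst + Pi.single (i.succAbove j) 1 + Pi.single i 1 := by ring
    have hsecond : s(d1.fst + Pi.single (i.succAbove j) 1,
        d1.fst + Pi.single i 1 + Pi.single (i.succAbove j) 1) ∈ h.edges := by
      rcases pr_eq_cases key with hcase | hcase
      · rw [hcomm, ← hcase]
        exact h2mem
      · have h3 : d2.fst + Pi.single i 1 = d1.fst + Pi.single (i.succAbove j) 1 := by
          rw [hcase, add_assoc, single_add_single, add_zero]
        rw [hcomm, ← h3, add_assoc, single_add_single, add_zero, Sym2.eq_swap]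
        exact h2mem
    exact hsq d1.fst (i.succAbove j) hj' (hedgeL d1 hd1L) hsecond
  have hnodupE : (L.map Dart.edge).Nodup := by
    have hsub : L.Sublist h.darts := by rw [hLdef]; exact List.filter_sublist
    exact (hsub.map Dart.edge).nodup hh.isCycle.isCircuit.isTrail.edges_nodup
  have hlift : ∀ d ∈ L, s(Fin.insertNth i 0 (pr i d.fst),
      Fin.insertNth i 0 (pr i d.fst) + Pi.single i 1) = d.edge := by
    intro d hd
    have hde : d.edge = s(d.fst, d.fst + Pi.single i 1) := by
      rw [hdartedge d, hsnd d (hmemL d hd).1]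
    rcases pr_eq_cases (pr_insertNth i (pr i d.fst)) with hcase | hcase
    · rw [hcase, hde]
    · have h3 : d.fst + Pi.single i 1 + Pi.single i 1 = d.fst := by
        rw [add_assoc, single_add_single, add_zero]
      rw [hcase, hde, h3, Sym2.eq_swap]
  have hnodup : (L.map (fun d => pr i d.fst)).Nodup := by
    have hmapeq : (L.map (fun d => pr i d.fst)).map
        (fun w => s(Fin.insertNth i 0 w, Fin.insertNth i 0 w + Pi.single i 1))
        = L.map Dart.edge := by
      rw [List.map_map]
      exact List.map_congr_left (fun d hd => hlift d hd)
    exact List.Nodup.of_map _ (hmapeq ▸ hnodupE)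
  have hcards : S.card = dimCount i h := by
    rw [hSdef, List.toFinset_card_of_nodup hnodup, List.length_map]
    have hdc : dimCount i h = L.length := by
      show (h.darts.map Dart.edge).countP (fun e => decide (isDimEdge i e)) = L.length
      rw [List.countP_map, hLdef, List.countP_eq_length_filter]
      rfl
    rw [hdc]
  have hdart : ∀ d : (Q (m+1)).Dart,
      (if decide (isDimEdge i d.edge) then 2 * rho i d.fst else 0 : ℤ)
        = rho i d.fst + rho i d.snd := by
    intro d
    by_cases hPd : isDimEdge i d.edge
    · rw [if_pos (decide_eq_true hPd), hsnd d hPd, rho_add_single_self]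
      ring
    · rw [if_neg (by simpa using hPd)]
      obtain ⟨j, hj⟩ : ∃ j, d.snd = d.fst + Pi.single j 1 := d.adj
      have hji : j ≠ i := by
        rintro rfl
        exact hPd ⟨d.fst, by rw [hdartedge d, hj]⟩
      rw [hj, rho_add_single_ne i hji]
      ring
  have hsum1 : (h.darts.map (fun d =>
      if decide (isDimEdge i d.edge) then 2 * rho i d.fst else (0:ℤ))).sum
      = (h.darts.map (fun d => rho i d.fst + rho i d.snd)).sum := by
    congr 1
    exact List.map_congr_left (fun d _ => hdart d)
  have hsum2 : (h.darts.map (fun d =>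
      if decide (isDimEdge i d.edge) then 2 * rho i d.fst else (0:ℤ))).sum
      = 2 * (L.map (fun d => rho i d.fst)).sum := by
    rw [sum_map_ite h.darts _ (fun d => 2 * rho i d.fst), ← hLdef]
    exact List.sum_map_mul_left _ _ _
  have hsum3 : (L.map (fun d => rho i d.fst)).sum = ∑ w ∈ S, rho' w := by
    have hmm : L.map (fun d => rho i d.fst) = (L.map (fun d => pr i d.fst)).map rho' := by
      rw [List.map_map]
      exact List.map_congr_left (fun d _ => rho_pr i d.fst)
    rw [hmm, hSdef]
    exact (List.sum_toFinset _ hnodup).symm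
  have hsum4 : (h.darts.map (fun d => rho i d.fst + rho i d.snd)).sum
      = ((h.support.dropLast).map (rho i)).sum + ((h.support.tail).map (rho i)).sum := by
    have hfsteq : h.darts.map (fun d => rho i d.fst) = (h.support.dropLast).map (rho i) := by
      rw [← Walk.map_fst_darts, List.map_map]
      rfl
    have hsndeq : h.darts.map (fun d => rho i d.snd) = (h.support.tail).map (rho i) := by
      rw [← Walk.map_snd_darts, List.map_map]
      rfl
    rw [sum_map_add', hfsteq, hsndeq]
  have huniv : ∀ (l : List (Fin (m+1) → ZMod 2)), l.Nodup → (∀ v, v ∈ l) →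
      (l.map (rho i)).sum = 0 := by
    intro l hnd hmem
    rw [← List.sum_toFinset _ hnd]
    have hlu : l.toFinset = Finset.univ := by
      ext x
      simp [hmem x]
    rw [hlu]
    exact sum_rho_zero i hm
  have hcount : ∀ v, h.support.tail.count v = 1 := by
    intro v
    have hhh := hh.isHamiltonian_tail v
    rwa [Walk.support_tail_of_not_nil h hh.isCycle.not_nil] at hhh
  have htail : ((h.support.tail).map (rho i)).sum = 0 := by
    refine huniv _ (List.nodup_iff_count_le_one.mpr (fun v => (hcount v).le)) (fun v => ?_)
    exact List.count_pos_iff.mp (by rw [hcount v]; norm_num)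
  have hdrop : ((h.support.dropLast).map (rho i)).sum = 0 := by
    have h1 : h.darts.map (·.fst) ++ [u] = h.support := Walk.map_fst_darts_append h
    have h2 : h.darts.map (·.fst) = h.support.dropLast := Walk.map_fst_darts h
    have h3 : h.support = u :: h.support.tail := Walk.support_eq_cons h
    have h4 : h.support.dropLast ++ [u] = u :: h.support.tail := by
      rw [← h2, h1]
      exact h3
    have hperm : h.support.dropLast.Perm h.support.tail := by
      have h5 : (u :: h.support.dropLast).Perm (u :: h.support.tail) := by
        rw [← h4]
        exact (List.perm_append_singleton u _).symm
      exact (List.perm_cons u).mp h5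
    rw [(hperm.map (rho i)).sum_eq]
    exact htail
  have hzero : ∑ w ∈ S, rho' w = 0 := by
    have h0 : 2 * ∑ w ∈ S, rho' w = 0 := by
      rw [← hsum3, ← hsum2, hsum1, hsum4, htail, hdrop]
      ring
    linarith
  have hZ1 : ∀ x : ZMod 2, ¬x = 0 ↔ x = 1 := by decide
  have hfilter : (S.filter fun w => par w = 0).card = (S.filter fun w => par w = 1).card := by
    have hsplit : ∑ w ∈ S.filter (fun w => par w = 0), rho' w
        + ∑ w ∈ S.filter (fun w => ¬par w = 0), rho' w = ∑ w ∈ S, rho' w :=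
      Finset.sum_filter_add_sum_filter_not S _ _
    have e0 : ∑ w ∈ S.filter (fun w => par w = 0), rho' w
        = ((S.filter (fun w => par w = 0)).card : ℤ) := by
      rw [Finset.sum_congr rfl
        (fun w hw => show rho' w = 1 from if_pos (Finset.mem_filter.mp hw).2)]
      simp
    have e1 : ∑ w ∈ S.filter (fun w => ¬par w = 0), rho' w
        = -((S.filter (fun w => ¬par w = 0)).card : ℤ) := by
      rw [Finset.sum_congr rfl
        (fun w hw => show rho' w = -1 from if_neg (Finset.mem_filter.mp hw).2)]
      simp
    have hf1 : S.filter (fun w => ¬par w = 0) = S.filter (fun w => par w = 1) :=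
      Finset.filter_congr (fun w _ => by rw [hZ1])
    rw [e0, e1, hzero, hf1] at hsplit
    omega
  have hle : dimCount i h ≤ equiIndepNum m := by
    unfold equiIndepNum
    refine le_csSup ⟨(Finset.univ : Finset (Fin m → ZMod 2)).card, ?_⟩
      ⟨S, hindep, hfilter, hcards⟩
    rintro k ⟨T, -, -, rfl⟩
    exact Finset.card_le_univ T
  rw [Nat.add_sub_cancel] at hc
  exact absurd hc (not_lt.2 hle)
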